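/- arXiv:2111.09671 — 2 statements merged into one kernel-verified Lean document; each statement's English description precedes it below -/
import Mathlib

section
/- Let k ≥ 1 and let φ be a 2-CNF formula over the 2k Boolean variables x_1,…,x_k, y_1,…,y_k that is consistent with the inner product, i.e., sat(φ) ⊆ IP^{-1}(1). Then |sat(φ)| ≤ 3^k. -/
/-- A literal is a pair (variable, required value); an assignment `a` satisfies a
clause (a finite set of literals, interpreted as their disjunction) if some literal
of the clause gets its required value. -/
def ClauseSat {V : Type*} (C : Finset (V × ZMod 2)) (a : V → ZMod 2) : Prop :=
  ∃ l ∈ C, a l.1 = l.2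

/-- The set of satisfying assignments of a CNF formula (a finite list of clauses,
interpreted as their conjunction). -/
def SatAssignments {V : Type*} (φ : List (Finset (V × ZMod 2))) :
    Set (V → ZMod 2) :=
  {a | ∀ C ∈ φ, ClauseSat C a}

/-- The (negated) inner product on `k` pairs of variables: `IP k a` holds if
`∑ i, x_i y_i = 0` over `𝔽₂`, where `x_i = a (Sum.inl i)` and `y_i = a (Sum.inr i)`. -/
def IP (k : ℕ) (a : (Fin k ⊕ Fin k) → ZMod 2) : Prop :=
  ∑ i : Fin k, a (Sum.inl i) * a (Sum.inr i) = 0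

namespace IPAux

abbrev Var (k : ℕ) := Fin k ⊕ Fin k

variable {k : ℕ}

/-- assignments in `sat φ` agreeing with `ρ` outside the pairs in `J`. -/
def Slice (φ : List (Finset (Var k × ZMod 2))) (J : Finset (Fin k)) (ρ : Var k → ZMod 2) :
    Set (Var k → ZMod 2) :=
  {a | a ∈ SatAssignments φ ∧ ∀ i : Fin k, i ∉ J →
    a (Sum.inl i) = ρ (Sum.inl i) ∧ a (Sum.inr i) = ρ (Sum.inr i)}

def upd (ρ : Var k → ZMod 2) (j : Fin k) (s t : ZMod 2) : Var k → ZMod 2 :=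
  Function.update (Function.update ρ (Sum.inl j) s) (Sum.inr j) t

lemma upd_inl {ρ : Var k → ZMod 2} {j i : Fin k} {s t : ZMod 2} :
    upd ρ j s t (Sum.inl i) = if i = j then s else ρ (Sum.inl i) := by
  by_cases h : i = j <;> simp [upd, Function.update_apply, h]

lemma upd_inr {ρ : Var k → ZMod 2} {j i : Fin k} {s t : ZMod 2} :
    upd ρ j s t (Sum.inr i) = if i = j then t else ρ (Sum.inr i) := by
  by_cases h : i = j <;> simp [upd, Function.update_apply, h]

variable {φ : List (Finset (Var k × ZMod 2))} {J : Finset (Fin k)} {ρ : Var k → ZMod 2}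
  {j : Fin k} {s t : ZMod 2}

lemma slice_sub (hj : j ∈ J) :
    Slice φ (J.erase j) (upd ρ j s t) ⊆ Slice φ J ρ := by
  rintro a ⟨ha, hoff⟩
  refine ⟨ha, fun i hi => ?_⟩
  have hij : i ≠ j := fun h => hi (h ▸ hj)
  have h := hoff i (by simp [Finset.mem_erase, hi])
  rwa [upd_inl, upd_inr, if_neg hij, if_neg hij] at h

lemma slice_val {a : Var k → ZMod 2} (ha : a ∈ Slice φ (J.erase j) (upd ρ j s t)) :
    a (Sum.inl j) = s ∧ a (Sum.inr j) = t := by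
  have h := ha.2 j (Finset.notMem_erase j J)
  rwa [upd_inl, upd_inr, if_pos rfl, if_pos rfl] at h

lemma slice_cover {a : Var k → ZMod 2} (hj : j ∈ J) (ha : a ∈ Slice φ J ρ) :
    a ∈ Slice φ (J.erase j) (upd ρ j (a (Sum.inl j)) (a (Sum.inr j))) := by
  refine ⟨ha.1, fun i hi => ?_⟩
  by_cases hij : i = j
  · subst hij; rw [upd_inl, upd_inr, if_pos rfl, if_pos rfl]; exact ⟨rfl, rfl⟩
  · have h := ha.2 i (fun h' => hi (Finset.mem_erase.2 ⟨hij, h'⟩))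
    rwa [upd_inl, upd_inr, if_neg hij, if_neg hij]

lemma zmod2_cases (z : ZMod 2) : z = 0 ∨ z = 1 := by revert z; decide

lemma sum_split (hj : j ∈ J) (a : Var k → ZMod 2) :
    ∑ i ∈ J, a (Sum.inl i) * a (Sum.inr i)
      = a (Sum.inl j) * a (Sum.inr j) + ∑ i ∈ J.erase j, a (Sum.inl i) * a (Sum.inr i) :=
  (Finset.add_sum_erase J _ hj).symm


variable {φ : List (Finset (Var k × ZMod 2))} {J : Finset (Fin k)} {ρ : Var k → ZMod 2}
  {j : Fin k}

/-- In the "hard case", extract a clause forcing an outside variable whenever `x_j = 0`. -/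
lemma key_x (h2 : ∀ C ∈ φ, C.card ≤ 2) {c : ZMod 2}
    (hsum : ∀ a ∈ Slice φ J ρ, ∑ i ∈ J, a (Sum.inl i) * a (Sum.inr i) = c)
    (hj : j ∈ J)
    {d0 : Var k → ZMod 2} (hd0 : d0 ∈ Slice φ (J.erase j) (upd ρ j 1 1))
    {b0 : Var k → ZMod 2} (hb0 : b0 ∈ Slice φ (J.erase j) (upd ρ j 0 1)) :
    ∃ j1 ∈ J.erase j, ∃ u ε, (u = Sum.inl j1 ∨ u = Sum.inr j1) ∧
      ∀ a ∈ SatAssignments φ, a (Sum.inl j) = 0 → a u = ε := by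
  have hd0J : d0 ∈ Slice φ J ρ := slice_sub hj hd0
  have hb0J : b0 ∈ Slice φ J ρ := slice_sub hj hb0
  obtain ⟨hd0l, hd0r⟩ := slice_val hd0
  obtain ⟨hb0l, hb0r⟩ := slice_val hb0
  set d1 : Var k → ZMod 2 := Function.update d0 (Sum.inl j) 0 with hd1def
  have hd1l : d1 (Sum.inl j) = 0 := Function.update_self _ _ _
  have hd1other : ∀ v : Var k, v ≠ Sum.inl j → d1 v = d0 v :=
    fun v hv => Function.update_of_ne hv _ _
  -- the sums over the erased set agree
  have hsum_erase : ∑ i ∈ J.erase j, d1 (Sum.inl i) * d1 (Sum.inr i)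
      = ∑ i ∈ J.erase j, d0 (Sum.inl i) * d0 (Sum.inr i) := by
    refine Finset.sum_congr rfl (fun i hi => ?_)
    have hij : i ≠ j := (Finset.mem_erase.1 hi).1
    rw [hd1other (Sum.inl i) (by simp [hij]), hd1other (Sum.inr i) (by simp)]
  have hd0sum := hsum d0 hd0J
  rw [sum_split hj, hd0l, hd0r] at hd0sum
  -- d1 is not satisfying
  have hd1 : d1 ∉ SatAssignments φ := by
    intro hsat
    have hmem : d1 ∈ Slice φ J ρ := by
      refine ⟨hsat, fun i hi => ?_⟩
      have hij : i ≠ j := fun h => hi (h ▸ hj)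
      have h := hd0J.2 i hi
      rw [hd1other (Sum.inl i) (by simp [hij]), hd1other (Sum.inr i) (by simp)]
      exact h
    have h := hsum d1 hmem
    rw [sum_split hj, hd1l, hd1other (Sum.inr j) (by simp), hd0r, hsum_erase] at h
    rw [zero_mul, zero_add] at h
    rw [h, one_mul] at hd0sum
    exact absurd hd0sum (by generalize c = z; revert z; decide)
  -- extract the violated clause
  have : ¬ ∀ C ∈ φ, ClauseSat C d1 := hd1
  push_neg at this
  obtain ⟨K1, hK1φ, hK1⟩ := this
  obtain ⟨l, hlK, hlval⟩ := hd0J.1 K1 hK1φ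
  have hl1 : l.1 = Sum.inl j := by
    by_contra h
    exact hK1 ⟨l, hlK, by rw [hd1other l.1 h]; exact hlval⟩
  have hl2 : l.2 = 1 := by rw [← hlval, hl1, hd0l]
  have hlit : ((Sum.inl j : Var k), (1 : ZMod 2)) ∈ K1 := by
    have : l = (Sum.inl j, 1) := Prod.ext hl1 hl2
    rwa [← this]
  obtain ⟨l', hl'K, hb0val⟩ := hb0J.1 K1 hK1φ
  have hne : l' ≠ ((Sum.inl j : Var k), (1 : ZMod 2)) := by
    rintro rfl
    have h01 : b0 (Sum.inl j) = 1 := hb0val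
    rw [hb0l] at h01
    exact absurd h01 (by decide)
  -- K1 = {(inl j, 1), l'}
  have hK1eq : K1 = {((Sum.inl j : Var k), (1 : ZMod 2)), l'} := by
    refine (Finset.eq_of_subset_of_card_le ?_ ?_).symm
    · intro x hx
      rcases Finset.mem_insert.1 hx with rfl | hx
      · exact hlit
      · rw [Finset.mem_singleton.1 hx]; exact hl'K
    · calc K1.card ≤ 2 := h2 K1 hK1φ
        _ = ({((Sum.inl j : Var k), (1 : ZMod 2)), l'} : Finset _).card := by
          rw [Finset.card_insert_of_notMem (by simp [Ne.symm hne]), Finset.card_singleton]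
  -- the forcing property
  have hforce : ∀ a ∈ SatAssignments φ, a (Sum.inl j) = 0 → a l'.1 = l'.2 := by
    intro a ha haj
    obtain ⟨w, hwK, hwval⟩ := ha K1 hK1φ
    rw [hK1eq] at hwK
    rcases Finset.mem_insert.1 hwK with rfl | hw
    · have h01 : a (Sum.inl j) = 1 := hwval
      rw [haj] at h01; exact absurd h01 (by decide)
    · rw [Finset.mem_singleton.1 hw] at hwval; exact hwval
  -- properties of l'
  have hd1l' : d1 l'.1 ≠ l'.2 := fun h => hK1 ⟨l', hl'K, h⟩
  have hul : l'.1 ≠ Sum.inl j := by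
    intro h
    apply hd1l'
    rw [h, hd1l, ← hb0l, ← h]
    exact hb0val
  have hd0l' : d0 l'.1 ≠ l'.2 := by rwa [hd1other l'.1 hul] at hd1l'
  have hur : l'.1 ≠ Sum.inr j := by
    intro h
    apply hd0l'
    rw [h, hd0r, ← hb0r, ← h]
    exact hb0val
  -- find the pair index
  obtain ⟨u, ε⟩ := l'
  simp only at hforce hd0l' hb0val hul hur
  have hmemJ : ∀ i : Fin k, (u = Sum.inl i ∨ u = Sum.inr i) → i ∈ J.erase j := by
    intro i hu
    have hij : i ≠ j := by
      rintro rfl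
      rcases hu with rfl | rfl
      · exact hul rfl
      · exact hur rfl
    refine Finset.mem_erase.2 ⟨hij, ?_⟩
    by_contra hiJ
    have hb := hb0.2 i (by simp [Finset.mem_erase, hiJ])
    have hd := hd0.2 i (by simp [Finset.mem_erase, hiJ])
    rcases hu with rfl | rfl
    · rw [hb.1, upd_inl, if_neg hij] at hb0val
      rw [hd.1, upd_inl, if_neg hij] at hd0l'
      exact hd0l' hb0val
    · rw [hb.2, upd_inr, if_neg hij] at hb0val
      rw [hd.2, upd_inr, if_neg hij] at hd0l'
      exact hd0l' hb0val
  rcases u with i | i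
  · exact ⟨i, hmemJ i (Or.inl rfl), Sum.inl i, ε, Or.inl rfl, hforce⟩
  · exact ⟨i, hmemJ i (Or.inr rfl), Sum.inr i, ε, Or.inr rfl, hforce⟩

/-- Symmetric version: forcing an outside variable whenever `y_j = 0`. -/
lemma key_y (h2 : ∀ C ∈ φ, C.card ≤ 2) {c : ZMod 2}
    (hsum : ∀ a ∈ Slice φ J ρ, ∑ i ∈ J, a (Sum.inl i) * a (Sum.inr i) = c)
    (hj : j ∈ J)
    {d0 : Var k → ZMod 2} (hd0 : d0 ∈ Slice φ (J.erase j) (upd ρ j 1 1))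
    {c0 : Var k → ZMod 2} (hc0 : c0 ∈ Slice φ (J.erase j) (upd ρ j 1 0)) :
    ∃ j1 ∈ J.erase j, ∃ u ε, (u = Sum.inl j1 ∨ u = Sum.inr j1) ∧
      ∀ a ∈ SatAssignments φ, a (Sum.inr j) = 0 → a u = ε := by
  have hd0J : d0 ∈ Slice φ J ρ := slice_sub hj hd0
  have hc0J : c0 ∈ Slice φ J ρ := slice_sub hj hc0
  obtain ⟨hd0l, hd0r⟩ := slice_val hd0
  obtain ⟨hc0l, hc0r⟩ := slice_val hc0
  set d1 : Var k → ZMod 2 := Function.update d0 (Sum.inr j) 0 with hd1def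
  have hd1r : d1 (Sum.inr j) = 0 := Function.update_self _ _ _
  have hd1other : ∀ v : Var k, v ≠ Sum.inr j → d1 v = d0 v :=
    fun v hv => Function.update_of_ne hv _ _
  have hsum_erase : ∑ i ∈ J.erase j, d1 (Sum.inl i) * d1 (Sum.inr i)
      = ∑ i ∈ J.erase j, d0 (Sum.inl i) * d0 (Sum.inr i) := by
    refine Finset.sum_congr rfl (fun i hi => ?_)
    have hij : i ≠ j := (Finset.mem_erase.1 hi).1
    rw [hd1other (Sum.inl i) (by simp), hd1other (Sum.inr i) (by simp [hij])]
  have hd0sum := hsum d0 hd0J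
  rw [sum_split hj, hd0l, hd0r] at hd0sum
  have hd1 : d1 ∉ SatAssignments φ := by
    intro hsat
    have hmem : d1 ∈ Slice φ J ρ := by
      refine ⟨hsat, fun i hi => ?_⟩
      have hij : i ≠ j := fun h => hi (h ▸ hj)
      have h := hd0J.2 i hi
      rw [hd1other (Sum.inl i) (by simp), hd1other (Sum.inr i) (by simp [hij])]
      exact h
    have h := hsum d1 hmem
    rw [sum_split hj, hd1r, hd1other (Sum.inl j) (by simp), hd0l, hsum_erase] at h
    rw [mul_zero, zero_add] at h
    rw [h, one_mul] at hd0sum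
    exact absurd hd0sum (by generalize c = z; revert z; decide)
  have : ¬ ∀ C ∈ φ, ClauseSat C d1 := hd1
  push_neg at this
  obtain ⟨K1, hK1φ, hK1⟩ := this
  obtain ⟨l, hlK, hlval⟩ := hd0J.1 K1 hK1φ
  have hl1 : l.1 = Sum.inr j := by
    by_contra h
    exact hK1 ⟨l, hlK, by rw [hd1other l.1 h]; exact hlval⟩
  have hl2 : l.2 = 1 := by rw [← hlval, hl1, hd0r]
  have hlit : ((Sum.inr j : Var k), (1 : ZMod 2)) ∈ K1 := by
    have : l = (Sum.inr j, 1) := Prod.ext hl1 hl2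
    rwa [← this]
  obtain ⟨l', hl'K, hc0val⟩ := hc0J.1 K1 hK1φ
  have hne : l' ≠ ((Sum.inr j : Var k), (1 : ZMod 2)) := by
    rintro rfl
    have h01 : c0 (Sum.inr j) = 1 := hc0val
    rw [hc0r] at h01
    exact absurd h01 (by decide)
  have hK1eq : K1 = {((Sum.inr j : Var k), (1 : ZMod 2)), l'} := by
    refine (Finset.eq_of_subset_of_card_le ?_ ?_).symm
    · intro x hx
      rcases Finset.mem_insert.1 hx with rfl | hx
      · exact hlit
      · rw [Finset.mem_singleton.1 hx]; exact hl'K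
    · calc K1.card ≤ 2 := h2 K1 hK1φ
        _ = ({((Sum.inr j : Var k), (1 : ZMod 2)), l'} : Finset _).card := by
          rw [Finset.card_insert_of_notMem (by simp [Ne.symm hne]), Finset.card_singleton]
  have hforce : ∀ a ∈ SatAssignments φ, a (Sum.inr j) = 0 → a l'.1 = l'.2 := by
    intro a ha haj
    obtain ⟨w, hwK, hwval⟩ := ha K1 hK1φ
    rw [hK1eq] at hwK
    rcases Finset.mem_insert.1 hwK with rfl | hw
    · have h01 : a (Sum.inr j) = 1 := hwval
      rw [haj] at h01; exact absurd h01 (by decide)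
    · rw [Finset.mem_singleton.1 hw] at hwval; exact hwval
  have hd1l' : d1 l'.1 ≠ l'.2 := fun h => hK1 ⟨l', hl'K, h⟩
  have hur : l'.1 ≠ Sum.inr j := by
    intro h
    apply hd1l'
    rw [h, hd1r, ← hc0r, ← h]
    exact hc0val
  have hd0l' : d0 l'.1 ≠ l'.2 := by rwa [hd1other l'.1 hur] at hd1l'
  have hul : l'.1 ≠ Sum.inl j := by
    intro h
    apply hd0l'
    rw [h, hd0l, ← hc0l, ← h]
    exact hc0val
  obtain ⟨u, ε⟩ := l'
  simp only at hforce hd0l' hc0val hul hur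
  have hmemJ : ∀ i : Fin k, (u = Sum.inl i ∨ u = Sum.inr i) → i ∈ J.erase j := by
    intro i hu
    have hij : i ≠ j := by
      rintro rfl
      rcases hu with rfl | rfl
      · exact hul rfl
      · exact hur rfl
    refine Finset.mem_erase.2 ⟨hij, ?_⟩
    by_contra hiJ
    have hb := hc0.2 i (by simp [Finset.mem_erase, hiJ])
    have hd := hd0.2 i (by simp [Finset.mem_erase, hiJ])
    rcases hu with rfl | rfl
    · rw [hb.1, upd_inl, if_neg hij] at hc0val
      rw [hd.1, upd_inl, if_neg hij] at hd0l'
      exact hd0l' hc0val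
    · rw [hb.2, upd_inr, if_neg hij] at hc0val
      rw [hd.2, upd_inr, if_neg hij] at hd0l'
      exact hd0l' hc0val
  rcases u with i | i
  · exact ⟨i, hmemJ i (Or.inl rfl), Sum.inl i, ε, Or.inl rfl, hforce⟩
  · exact ⟨i, hmemJ i (Or.inr rfl), Sum.inr i, ε, Or.inr rfl, hforce⟩

lemma sum_erase_cond (hj : j ∈ J) {c : ZMod 2}
    (hsum : ∀ a ∈ Slice φ J ρ, ∑ i ∈ J, a (Sum.inl i) * a (Sum.inr i) = c)
    (s t : ZMod 2) :
    ∀ a ∈ Slice φ (J.erase j) (upd ρ j s t),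
      ∑ i ∈ J.erase j, a (Sum.inl i) * a (Sum.inr i) = s * t + c := by
  intro a ha
  have h := hsum a (slice_sub hj ha)
  obtain ⟨h1, h2⟩ := slice_val ha
  rw [sum_split hj, h1, h2] at h
  have h0 : ∀ z : ZMod 2, z + z = 0 := by decide
  calc ∑ i ∈ J.erase j, a (Sum.inl i) * a (Sum.inr i)
      = s * t + (s * t + ∑ i ∈ J.erase j, a (Sum.inl i) * a (Sum.inr i)) := by
        rw [← add_assoc, h0, zero_add]
    _ = s * t + c := by rw [h]

lemma block_bound {m : ℕ}
    (IH : ∀ (J : Finset (Fin k)) (ρ : Var k → ZMod 2) (c : ZMod 2), J.card = m →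
      (∀ a ∈ Slice φ J ρ, ∑ i ∈ J, a (Sum.inl i) * a (Sum.inr i) = c) →
      (Slice φ J ρ).ncard ≤ 3 ^ m)
    {c : ZMod 2}
    (hcard : J.card = m + 1)
    (hsum : ∀ a ∈ Slice φ J ρ, ∑ i ∈ J, a (Sum.inl i) * a (Sum.inr i) = c)
    {j1 : Fin k} (hj1 : j1 ∈ J) {u : Var k} {ε : ZMod 2}
    (hu : u = Sum.inl j1 ∨ u = Sum.inr j1)
    (hfix : ∀ a ∈ Slice φ J ρ, a u = ε) :
    (Slice φ J ρ).ncard ≤ 2 * 3 ^ m := by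
  have hcardE : (J.erase j1).card = m := by
    rw [Finset.card_erase_of_mem hj1, hcard]; omega
  have subbound : ∀ s t : ZMod 2,
      (Slice φ (J.erase j1) (upd ρ j1 s t)).ncard ≤ 3 ^ m := fun s t =>
    IH _ _ (s * t + c) hcardE (sum_erase_cond hj1 hsum s t)
  rcases hu with rfl | rfl
  · have cover : Slice φ J ρ ⊆
        Slice φ (J.erase j1) (upd ρ j1 ε 0) ∪ Slice φ (J.erase j1) (upd ρ j1 ε 1) := by
      intro a ha
      have h := slice_cover hj1 ha
      rw [hfix a ha] at h
      rcases zmod2_cases (a (Sum.inr j1)) with h0 | h0 <;> rw [h0] at h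
      · exact Or.inl h
      · exact Or.inr h
    calc (Slice φ J ρ).ncard
        ≤ (Slice φ (J.erase j1) (upd ρ j1 ε 0) ∪ Slice φ (J.erase j1) (upd ρ j1 ε 1)).ncard :=
          Set.ncard_le_ncard cover (Set.toFinite _)
      _ ≤ (Slice φ (J.erase j1) (upd ρ j1 ε 0)).ncard
          + (Slice φ (J.erase j1) (upd ρ j1 ε 1)).ncard := Set.ncard_union_le _ _
      _ ≤ 3 ^ m + 3 ^ m := add_le_add (subbound ε 0) (subbound ε 1)
      _ = 2 * 3 ^ m := by ring
  · have cover : Slice φ J ρ ⊆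
        Slice φ (J.erase j1) (upd ρ j1 0 ε) ∪ Slice φ (J.erase j1) (upd ρ j1 1 ε) := by
      intro a ha
      have h := slice_cover hj1 ha
      rw [hfix a ha] at h
      rcases zmod2_cases (a (Sum.inl j1)) with h0 | h0 <;> rw [h0] at h
      · exact Or.inl h
      · exact Or.inr h
    calc (Slice φ J ρ).ncard
        ≤ (Slice φ (J.erase j1) (upd ρ j1 0 ε) ∪ Slice φ (J.erase j1) (upd ρ j1 1 ε)).ncard :=
          Set.ncard_le_ncard cover (Set.toFinite _)
      _ ≤ (Slice φ (J.erase j1) (upd ρ j1 0 ε)).ncard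
          + (Slice φ (J.erase j1) (upd ρ j1 1 ε)).ncard := Set.ncard_union_le _ _
      _ ≤ 3 ^ m + 3 ^ m := add_le_add (subbound 0 ε) (subbound 1 ε)
      _ = 2 * 3 ^ m := by ring

lemma main_bound (φ : List (Finset (Var k × ZMod 2))) (h2 : ∀ C ∈ φ, C.card ≤ 2) :
    ∀ (n : ℕ) (J : Finset (Fin k)) (ρ : Var k → ZMod 2) (c : ZMod 2), J.card = n →
      (∀ a ∈ Slice φ J ρ, ∑ i ∈ J, a (Sum.inl i) * a (Sum.inr i) = c) →
      (Slice φ J ρ).ncard ≤ 3 ^ n := by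
  intro n
  induction n using Nat.strong_induction_on with
  | _ n IH =>
  intro J ρ c hcard hsum
  rcases Nat.eq_zero_or_pos n with rfl | hn
  · -- base case : everything is fixed
    have hJ : J = ∅ := Finset.card_eq_zero.1 hcard
    subst hJ
    have hsub : Slice φ ∅ ρ ⊆ {ρ} := by
      intro a ha
      have : a = ρ := by
        funext v
        rcases v with i | i
        · exact (ha.2 i (Finset.notMem_empty i)).1
        · exact (ha.2 i (Finset.notMem_empty i)).2
      simp [this]
    calc (Slice φ ∅ ρ).ncard ≤ ({ρ} : Set (Var k → ZMod 2)).ncard :=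
          Set.ncard_le_ncard hsub (Set.toFinite _)
      _ = 1 := Set.ncard_singleton ρ
      _ ≤ 3 ^ 0 := le_refl 1
  · obtain ⟨m, rfl⟩ : ∃ m, n = m + 1 := ⟨n - 1, by omega⟩
    obtain ⟨j, hj⟩ := Finset.card_pos.1 (by omega : 0 < J.card)
    set A := Slice φ (J.erase j) (upd ρ j 0 0) with hA
    set B := Slice φ (J.erase j) (upd ρ j 0 1) with hB
    set C := Slice φ (J.erase j) (upd ρ j 1 0) with hC
    set D := Slice φ (J.erase j) (upd ρ j 1 1) with hD
    have cover : Slice φ J ρ ⊆ A ∪ B ∪ C ∪ D := by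
      intro a ha
      have h := slice_cover hj ha
      rcases zmod2_cases (a (Sum.inl j)) with h1 | h1 <;>
        rcases zmod2_cases (a (Sum.inr j)) with h2 | h2 <;> rw [h1, h2] at h
      · exact Or.inl (Or.inl (Or.inl h))
      · exact Or.inl (Or.inl (Or.inr h))
      · exact Or.inl (Or.inr h)
      · exact Or.inr h
    have quad : (Slice φ J ρ).ncard ≤ A.ncard + B.ncard + C.ncard + D.ncard := by
      calc (Slice φ J ρ).ncard ≤ (A ∪ B ∪ C ∪ D).ncard :=
            Set.ncard_le_ncard cover (Set.toFinite _)
        _ ≤ (A ∪ B ∪ C).ncard + D.ncard := Set.ncard_union_le _ _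
        _ ≤ ((A ∪ B).ncard + C.ncard) + D.ncard :=
            Nat.add_le_add_right (Set.ncard_union_le _ _) _
        _ ≤ ((A.ncard + B.ncard) + C.ncard) + D.ncard :=
            Nat.add_le_add_right (Nat.add_le_add_right (Set.ncard_union_le _ _) _) _
    have hcardE : (J.erase j).card = m := by
      rw [Finset.card_erase_of_mem hj, hcard]; omega
    have bounds : ∀ s t : ZMod 2,
        (Slice φ (J.erase j) (upd ρ j s t)).ncard ≤ 3 ^ m := fun s t =>
      IH m (by omega) _ _ (s * t + c) hcardE (sum_erase_cond hj hsum s t)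
    rcases Set.eq_empty_or_nonempty D with hDe | ⟨d0, hd0⟩
    · calc (Slice φ J ρ).ncard ≤ A.ncard + B.ncard + C.ncard + D.ncard := quad
        _ ≤ 3 ^ m + 3 ^ m + 3 ^ m + 0 := by
            rw [hDe, Set.ncard_empty]
            exact add_le_add (add_le_add (add_le_add (bounds 0 0) (bounds 0 1)) (bounds 1 0))
              (le_refl 0)
        _ ≤ 3 ^ (m + 1) := by ring_nf; omega
    rcases Set.eq_empty_or_nonempty B with hBe | ⟨b0, hb0⟩
    · calc (Slice φ J ρ).ncard ≤ A.ncard + B.ncard + C.ncard + D.ncard := quad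
        _ ≤ 3 ^ m + 0 + 3 ^ m + 3 ^ m := by
            rw [hBe, Set.ncard_empty]
            exact add_le_add (add_le_add (add_le_add (bounds 0 0) (le_refl 0)) (bounds 1 0))
              (bounds 1 1)
        _ ≤ 3 ^ (m + 1) := by ring_nf; omega
    rcases Set.eq_empty_or_nonempty C with hCe | ⟨c0, hc0⟩
    · calc (Slice φ J ρ).ncard ≤ A.ncard + B.ncard + C.ncard + D.ncard := quad
        _ ≤ 3 ^ m + 3 ^ m + 0 + 3 ^ m := by
            rw [hCe, Set.ncard_empty]
            exact add_le_add (add_le_add (add_le_add (bounds 0 0) (bounds 0 1)) (le_refl 0))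
              (bounds 1 1)
        _ ≤ 3 ^ (m + 1) := by ring_nf; omega
    · -- hard case : all of B, C, D are nonempty
      obtain ⟨j1, hj1, u, ε, hu, hforceX⟩ := key_x h2 hsum hj hd0 hb0
      obtain ⟨j2, hj2, v, δ, hv, hforceY⟩ := key_y h2 hsum hj hd0 hc0
      have hm1 : 1 ≤ m := by
        have : 0 < (J.erase j).card := Finset.card_pos.2 ⟨j1, hj1⟩
        omega
      obtain ⟨m', rfl⟩ : ∃ m', m = m' + 1 := ⟨m - 1, by omega⟩
      have IH2 : ∀ (J : Finset (Fin k)) (ρ : Var k → ZMod 2) (c : ZMod 2), J.card = m' →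
          (∀ a ∈ Slice φ J ρ, ∑ i ∈ J, a (Sum.inl i) * a (Sum.inr i) = c) →
          (Slice φ J ρ).ncard ≤ 3 ^ m' :=
        fun J' ρ' c' h1 h2' => IH m' (by omega) J' ρ' c' h1 h2'
      have hAbound : A.ncard ≤ 2 * 3 ^ m' := by
        refine block_bound IH2 hcardE (sum_erase_cond hj hsum 0 0) hj1 (ε := ε) hu ?_
        intro a ha
        exact hforceX a (slice_sub hj ha).1 (slice_val ha).1
      have hBbound : B.ncard ≤ 2 * 3 ^ m' := by
        refine block_bound IH2 hcardE (sum_erase_cond hj hsum 0 1) hj1 (ε := ε) hu ?_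
        intro a ha
        exact hforceX a (slice_sub hj ha).1 (slice_val ha).1
      have hCbound : C.ncard ≤ 2 * 3 ^ m' := by
        refine block_bound IH2 hcardE (sum_erase_cond hj hsum 1 0) hj2 (ε := δ) hv ?_
        intro a ha
        exact hforceY a (slice_sub hj ha).1 (slice_val ha).2
      calc (Slice φ J ρ).ncard ≤ A.ncard + B.ncard + C.ncard + D.ncard := quad
        _ ≤ 2 * 3 ^ m' + 2 * 3 ^ m' + 2 * 3 ^ m' + 3 ^ (m' + 1) :=
            add_le_add (add_le_add (add_le_add hAbound hBbound) hCbound) (bounds 1 1)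
        _ = 3 ^ (m' + 1 + 1) := by ring
end IPAux

theorem stmt_17 {k : ℕ} (hk : 1 ≤ k)
    (φ : List (Finset ((Fin k ⊕ Fin k) × ZMod 2)))
    (h2 : ∀ C ∈ φ, C.card ≤ 2)
    (hcons : ∀ a ∈ SatAssignments φ, IP k a) :
    (SatAssignments φ).ncard ≤ 3 ^ k := by
  have hEq : SatAssignments φ = IPAux.Slice φ Finset.univ (fun _ => 0) := by
    ext a
    simp [IPAux.Slice]
  rw [hEq]
  refine IPAux.main_bound φ h2 k Finset.univ (fun _ => 0) 0 ?_ ?_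
  · simp
  · intro a ha
    exact hcons a (by rw [hEq]; exact ha)
end

section
/- Let k ≥ 1 and let φ be a 2-CNF formula over the variables x_1,…,x_k, y_1,…,y_k that is consistent with the inner product. Let J ⊆ [k] be nonempty and suppose φ has two satisfying assignments σ and τ such that σ(x_i) = 0 and σ(y_i) = 1 for all i ∈ J, τ(x_i) = 1 and τ(y_i) = 0 for all i ∈ J, and σ(x_i) = τ(x_i) and σ(y_i) = τ(y_i) for all i ∈ [k] \ J. Then at least one of the following holds: (1) there exists i ∈ J such that every satisfying assignment α of φ satisfies α(x_i)·α(y_i) = 0; (2) there exist distinct i, j ∈ J such that every satisfying assignment α of φ satisfies α(x_i) = α(x_j). -/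
/-! ### Auxiliary machinery: the majority (median) operation -/

/-- Median of three elements of `𝔽₂`. -/
def med3 (a b c : ZMod 2) : ZMod 2 := a * b + a * c + b * c

/-- Pointwise median of three assignments. -/
def medA {V : Type*} (a b c : V → ZMod 2) : V → ZMod 2 := fun v => med3 (a v) (b v) (c v)

lemma med3_left (a b : ZMod 2) : med3 a a b = a := by revert a b; decide

lemma med3_outer (a b : ZMod 2) : med3 a b a = a := by revert a b; decide

lemma med3_right (a b : ZMod 2) : med3 b a a = a := by revert a b; decide

lemma zmod2_cases (a : ZMod 2) : a = 0 ∨ a = 1 := by revert a; decide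

/-- 2-CNF solution sets are closed under pointwise median. -/
lemma medA_sat {V : Type*} (φ : List (Finset (V × ZMod 2))) (h2 : ∀ C ∈ φ, C.card ≤ 2)
    {a b c : V → ZMod 2} (ha : a ∈ SatAssignments φ) (hb : b ∈ SatAssignments φ)
    (hc : c ∈ SatAssignments φ) : medA a b c ∈ SatAssignments φ := by
  classical
  intro C hC
  obtain ⟨la, hla, hva⟩ := ha C hC
  obtain ⟨lb, hlb, hvb⟩ := hb C hC
  obtain ⟨lc, hlc, hvc⟩ := hc C hC
  by_cases hab : la = lb
  · exact ⟨la, hla, by subst hab; simp only [medA, hva, hvb, med3_left]⟩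
  by_cases hac : la = lc
  · exact ⟨la, hla, by subst hac; simp only [medA, hva, hvc, med3_outer]⟩
  by_cases hbc : lb = lc
  · exact ⟨lb, hlb, by subst hbc; simp only [medA, hvb, hvc, med3_right]⟩
  · exfalso
    have hsub : ({la, lb, lc} : Finset (V × ZMod 2)) ⊆ C := by
      intro z hz
      simp only [Finset.mem_insert, Finset.mem_singleton] at hz
      rcases hz with h | h | h <;> subst h <;> assumption
    have hcard : ({la, lb, lc} : Finset (V × ZMod 2)).card = 3 := by
      rw [Finset.card_insert_of_notMem (by simp [hab, hac]),
        Finset.card_insert_of_notMem (by simp [hbc]), Finset.card_singleton]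
    have := Finset.card_le_card hsub
    have := h2 C hC
    omega

/-- The set of "on" coordinates (where both `x_i` and `y_i` are 1) within `J`. -/
def onSet {k : ℕ} (J : Finset (Fin k)) (t : (Fin k ⊕ Fin k) → ZMod 2) : Finset (Fin k) :=
  J.filter (fun i => t (Sum.inl i) = 1 ∧ t (Sum.inr i) = 1)

/-- Weight used for the minimality argument. -/
def wt {k : ℕ} (J : Finset (Fin k)) (t : (Fin k ⊕ Fin k) → ZMod 2) : ℕ :=
  (J.filter (fun i => t (Sum.inl i) = 1)).card + (J.filter (fun i => t (Sum.inr i) = 0)).card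

theorem stmt_18 {k : ℕ} (hk : 1 ≤ k)
    (φ : List (Finset ((Fin k ⊕ Fin k) × ZMod 2)))
    (h2 : ∀ C ∈ φ, C.card ≤ 2)
    (hcons : ∀ a ∈ SatAssignments φ, IP k a)
    (J : Finset (Fin k)) (hJ : J.Nonempty)
    (σ τ : (Fin k ⊕ Fin k) → ZMod 2)
    (hσ : σ ∈ SatAssignments φ) (hτ : τ ∈ SatAssignments φ)
    (hσJ : ∀ i ∈ J, σ (Sum.inl i) = 0 ∧ σ (Sum.inr i) = 1)
    (hτJ : ∀ i ∈ J, τ (Sum.inl i) = 1 ∧ τ (Sum.inr i) = 0)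
    (hagree : ∀ i ∉ J, σ (Sum.inl i) = τ (Sum.inl i) ∧ σ (Sum.inr i) = τ (Sum.inr i)) :
    (∃ i ∈ J, ∀ α ∈ SatAssignments φ, α (Sum.inl i) * α (Sum.inr i) = 0) ∨
    (∃ i ∈ J, ∃ j ∈ J, i ≠ j ∧
      ∀ α ∈ SatAssignments φ, α (Sum.inl i) = α (Sum.inl j)) := by
  classical
  -- T : elements of Sat that agree with σ outside J
  set T : Set ((Fin k ⊕ Fin k) → ZMod 2) :=
    {t | t ∈ SatAssignments φ ∧
      ∀ i, i ∉ J → t (Sum.inl i) = σ (Sum.inl i) ∧ t (Sum.inr i) = σ (Sum.inr i)} with hT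
  -- projection of a satisfying assignment into T
  have hproj : ∀ α ∈ SatAssignments φ, medA σ τ α ∈ T ∧
      (∀ i ∈ J, medA σ τ α (Sum.inl i) = α (Sum.inl i) ∧
        medA σ τ α (Sum.inr i) = α (Sum.inr i)) := by
    intro α hα
    refine ⟨⟨medA_sat φ h2 hσ hτ hα, ?_⟩, ?_⟩
    · intro i hi
      constructor
      · show med3 (σ (Sum.inl i)) (τ (Sum.inl i)) (α (Sum.inl i)) = _
        rw [← (hagree i hi).1, med3_left]
      · show med3 (σ (Sum.inr i)) (τ (Sum.inr i)) (α (Sum.inr i)) = _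
        rw [← (hagree i hi).2, med3_left]
    · intro i hi
      constructor
      · show med3 (σ (Sum.inl i)) (τ (Sum.inl i)) (α (Sum.inl i)) = _
        rw [(hσJ i hi).1, (hτJ i hi).1]
        rcases zmod2_cases (α (Sum.inl i)) with h | h <;> rw [h] <;> decide
      · show med3 (σ (Sum.inr i)) (τ (Sum.inr i)) (α (Sum.inr i)) = _
        rw [(hσJ i hi).2, (hτJ i hi).2]
        rcases zmod2_cases (α (Sum.inr i)) with h | h <;> rw [h] <;> decide
  -- the J-part of the inner product vanishes on T
  have hsumJ : ∀ t ∈ T, ∑ i ∈ J, t (Sum.inl i) * t (Sum.inr i) = 0 := by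
    intro t ht
    have hIPt : ∑ i : Fin k, t (Sum.inl i) * t (Sum.inr i) = 0 := hcons t ht.1
    have hIPσ : ∑ i : Fin k, σ (Sum.inl i) * σ (Sum.inr i) = 0 := hcons σ hσ
    have hsplit : ∀ g : (Fin k ⊕ Fin k) → ZMod 2,
        (∑ i ∈ J, g (Sum.inl i) * g (Sum.inr i)) +
        (∑ i ∈ Jᶜ, g (Sum.inl i) * g (Sum.inr i)) =
        ∑ i : Fin k, g (Sum.inl i) * g (Sum.inr i) := fun g =>
      Finset.sum_add_sum_compl J _
    have hσJ0 : ∑ i ∈ J, σ (Sum.inl i) * σ (Sum.inr i) = 0 := by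
      refine Finset.sum_eq_zero fun i hi => by rw [(hσJ i hi).1, zero_mul]
    have hσc : ∑ i ∈ Jᶜ, σ (Sum.inl i) * σ (Sum.inr i) = 0 := by
      have := hsplit σ
      rw [hσJ0, zero_add] at this
      rw [this, hIPσ]
    have htc : ∑ i ∈ Jᶜ, t (Sum.inl i) * t (Sum.inr i) = 0 := by
      rw [← hσc]
      refine Finset.sum_congr rfl fun i hi => ?_
      have hi' : i ∉ J := Finset.mem_compl.mp hi
      rw [(ht.2 i hi').1, (ht.2 i hi').2]
    have := hsplit t
    rw [htc, add_zero] at this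
    rw [this, hIPt]
  -- hence the on-set of any element of T has even cardinality
  have heven : ∀ t ∈ T, 2 ∣ (onSet J t).card := by
    intro t ht
    have h1 : ∑ i ∈ J, t (Sum.inl i) * t (Sum.inr i) =
        ∑ i ∈ J, (if t (Sum.inl i) = 1 ∧ t (Sum.inr i) = 1 then (1 : ZMod 2) else 0) := by
      refine Finset.sum_congr rfl fun i _ => ?_
      rcases zmod2_cases (t (Sum.inl i)) with h | h <;>
        rcases zmod2_cases (t (Sum.inr i)) with h' | h' <;> rw [h, h'] <;> decide
    have h2' : (((onSet J t).card : ZMod 2)) = 0 := by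
      rw [onSet, ← Finset.sum_boole, ← h1, hsumJ t ht]
    exact (ZMod.natCast_eq_zero_iff _ 2).mp h2'
  by_cases H : ∃ t ∈ T, (onSet J t).Nonempty
  · -- minimal weight element with nonempty on-set
    right
    obtain ⟨m, hmS, hmin⟩ := Set.exists_min_image {t | t ∈ T ∧ (onSet J t).Nonempty}
      (wt J) (Set.toFinite _) H
    obtain ⟨hmT, hmne⟩ := hmS
    -- key: if t ∈ T has some common on-coordinate with m, then every
    -- x-coordinate that is 1 in m is 1 in t
    have hkey : ∀ t ∈ T, ∀ i, i ∈ onSet J m → i ∈ onSet J t →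
        ∀ l ∈ J, m (Sum.inl l) = 1 → t (Sum.inl l) = 1 := by
      intro t ht i him hit l hl hml
      set s := medA σ m t with hs
      have hsT : s ∈ T := by
        refine ⟨medA_sat φ h2 hσ hmT.1 ht.1, fun i' hi' => ?_⟩
        constructor
        · show med3 (σ (Sum.inl i')) (m (Sum.inl i')) (t (Sum.inl i')) = _
          rw [(hmT.2 i' hi').1, (ht.2 i' hi').1, med3_right]
        · show med3 (σ (Sum.inr i')) (m (Sum.inr i')) (t (Sum.inr i')) = _
          rw [(hmT.2 i' hi').2, (ht.2 i' hi').2, med3_right]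
      have hsx : ∀ l' ∈ J, s (Sum.inl l') = m (Sum.inl l') * t (Sum.inl l') := by
        intro l' hl'
        show med3 (σ (Sum.inl l')) (m (Sum.inl l')) (t (Sum.inl l')) = _
        rw [(hσJ l' hl').1]
        rcases zmod2_cases (m (Sum.inl l')) with h | h <;>
          rcases zmod2_cases (t (Sum.inl l')) with h' | h' <;> rw [h, h'] <;> decide
      have hsy : ∀ l' ∈ J, (s (Sum.inr l') = 0 ↔ m (Sum.inr l') = 0 ∧ t (Sum.inr l') = 0) := by
        intro l' hl'
        show med3 (σ (Sum.inr l')) (m (Sum.inr l')) (t (Sum.inr l')) = 0 ↔ _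
        rw [(hσJ l' hl').2]
        rcases zmod2_cases (m (Sum.inr l')) with h | h <;>
          rcases zmod2_cases (t (Sum.inr l')) with h' | h' <;> rw [h, h'] <;> simp <;> decide
      simp only [onSet, Finset.mem_filter] at him hit
      have hiJ : i ∈ J := him.1
      have hison : i ∈ onSet J s := by
        simp only [onSet, Finset.mem_filter]
        refine ⟨hiJ, ?_, ?_⟩
        · rw [hsx i hiJ, him.2.1, hit.2.1]; decide
        · rcases zmod2_cases (s (Sum.inr i)) with h | h
          · exact absurd ((hsy i hiJ).mp h).1 (by rw [him.2.2]; decide)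
          · exact h
      have hsubx : J.filter (fun l' => s (Sum.inl l') = 1) ⊆
          J.filter (fun l' => m (Sum.inl l') = 1) := by
        intro l' hl'
        simp only [Finset.mem_filter] at hl' ⊢
        refine ⟨hl'.1, ?_⟩
        have := hl'.2
        rw [hsx l' hl'.1] at this
        rcases zmod2_cases (m (Sum.inl l')) with h | h
        · rw [h, zero_mul] at this; exact absurd this (by decide)
        · exact h
      have hsuby : J.filter (fun l' => s (Sum.inr l') = 0) ⊆
          J.filter (fun l' => m (Sum.inr l') = 0) := by
        intro l' hl'
        simp only [Finset.mem_filter] at hl' ⊢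
        exact ⟨hl'.1, ((hsy l' hl'.1).mp hl'.2).1⟩
      have hwle : wt J m ≤ wt J s := hmin s ⟨hsT, ⟨i, hison⟩⟩
      have hcx := Finset.card_le_card hsubx
      have hcy := Finset.card_le_card hsuby
      have hex : J.filter (fun l' => s (Sum.inl l') = 1) =
          J.filter (fun l' => m (Sum.inl l') = 1) := by
        refine Finset.eq_of_subset_of_card_le hsubx ?_
        unfold wt at hwle
        omega
      have hls : s (Sum.inl l) = 1 := by
        have : l ∈ J.filter (fun l' => m (Sum.inl l') = 1) := by
          simp only [Finset.mem_filter]; exact ⟨hl, hml⟩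
        rw [← hex] at this
        simp only [Finset.mem_filter] at this
        exact this.2
      rw [hsx l hl, hml, one_mul] at hls
      exact hls
    -- pick two distinct on-coordinates of m
    have hcard2 : 1 < (onSet J m).card := by
      have := heven m hmT
      have h1 : 1 ≤ (onSet J m).card := Finset.card_pos.mpr hmne
      omega
    obtain ⟨i, hi, j, hj, hij⟩ := Finset.one_lt_card.mp hcard2
    have hiJ : i ∈ J := (Finset.mem_filter.mp hi).1
    have hjJ : j ∈ J := (Finset.mem_filter.mp hj).1
    refine ⟨i, hiJ, j, hjJ, hij, ?_⟩
    intro α hα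
    obtain ⟨ht1T, ht1v⟩ := hproj α hα
    set t1 := medA σ τ α with ht1
    rw [← (ht1v i hiJ).1, ← (ht1v j hjJ).1]
    -- show t1 has equal x-values at i and j
    by_contra hne
    have hmxi : m (Sum.inl i) = 1 := (Finset.mem_filter.mp hi).2.1
    have hmyi : m (Sum.inr i) = 1 := (Finset.mem_filter.mp hi).2.2
    have hmxj : m (Sum.inl j) = 1 := (Finset.mem_filter.mp hj).2.1
    have hmyj : m (Sum.inr j) = 1 := (Finset.mem_filter.mp hj).2.2
    set s := medA σ m t1 with hs
    have hsT : s ∈ T := by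
      refine ⟨medA_sat φ h2 hσ hmT.1 ht1T.1, fun i' hi' => ?_⟩
      constructor
      · show med3 (σ (Sum.inl i')) (m (Sum.inl i')) (t1 (Sum.inl i')) = _
        rw [(hmT.2 i' hi').1, (ht1T.2 i' hi').1, med3_right]
      · show med3 (σ (Sum.inr i')) (m (Sum.inr i')) (t1 (Sum.inr i')) = _
        rw [(hmT.2 i' hi').2, (ht1T.2 i' hi').2, med3_right]
    have hsx : ∀ l' ∈ J, s (Sum.inl l') = m (Sum.inl l') * t1 (Sum.inl l') := by
      intro l' hl'
      show med3 (σ (Sum.inl l')) (m (Sum.inl l')) (t1 (Sum.inl l')) = _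
      rw [(hσJ l' hl').1]
      rcases zmod2_cases (m (Sum.inl l')) with h | h <;>
        rcases zmod2_cases (t1 (Sum.inl l')) with h' | h' <;> rw [h, h'] <;> decide
    have hsy1 : ∀ l' ∈ J, m (Sum.inr l') = 1 → s (Sum.inr l') = 1 := by
      intro l' hl' hm1
      show med3 (σ (Sum.inr l')) (m (Sum.inr l')) (t1 (Sum.inr l')) = _
      rw [(hσJ l' hl').2, hm1]
      rcases zmod2_cases (t1 (Sum.inr l')) with h | h <;> rw [h] <;> decide
    rcases zmod2_cases (t1 (Sum.inl i)) with hxi | hxi <;>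
      rcases zmod2_cases (t1 (Sum.inl j)) with hxj | hxj
    · exact hne (by rw [hxi, hxj])
    · -- t1: x_i = 0, x_j = 1 : use key lemma at j
      have hjon : j ∈ onSet J s := by
        simp only [onSet, Finset.mem_filter]
        exact ⟨hjJ, by rw [hsx j hjJ, hmxj, hxj]; decide, hsy1 j hjJ hmyj⟩
      have := hkey s hsT j hj hjon i hiJ hmxi
      rw [hsx i hiJ, hmxi, hxi] at this
      exact absurd this (by decide)
    · -- t1: x_i = 1, x_j = 0 : use key lemma at i
      have hion : i ∈ onSet J s := by
        simp only [onSet, Finset.mem_filter]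
        exact ⟨hiJ, by rw [hsx i hiJ, hmxi, hxi]; decide, hsy1 i hiJ hmyi⟩
      have := hkey s hsT i hi hion j hjJ hmxj
      rw [hsx j hjJ, hmxj, hxj] at this
      exact absurd this (by decide)
    · exact hne (by rw [hxi, hxj])
  · -- no element of T turns on any coordinate: conclusion (1)
    left
    push_neg at H
    obtain ⟨i, hi⟩ := hJ
    refine ⟨i, hi, fun α hα => ?_⟩
    obtain ⟨htT, htv⟩ := hproj α hα
    have h0 := H _ htT
    have hni : i ∉ onSet J (medA σ τ α) := by rw [h0]; exact Finset.notMem_empty i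
    simp only [onSet, Finset.mem_filter, not_and] at hni
    have := hni hi
    rw [(htv i hi).1, (htv i hi).2] at this
    rcases zmod2_cases (α (Sum.inl i)) with h | h <;>
      rcases zmod2_cases (α (Sum.inr i)) with h' | h'
    · rw [h, h']; decide
    · rw [h, h']; decide
    · rw [h, h']; decide
    · exact absurd (this h) (by rw [h']; simp)
end
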